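/- For every fixed T with 0 < T < 1, the function x ↦ a(x, T) := (2x + T)·log(1 + T/x) + (2(1−x) − T)·log(1 − T/(1−x)) is strictly decreasing on the interval 0 < x < 1 − T. -/

import Mathlib

open Matrix MeasureTheory
open scoped ComplexOrder

noncomputable section

/-- Logarithm of a matrix: for a Hermitian matrix, apply the real logarithm to the
eigenvalues via the spectral decomposition (functional calculus); junk value `0`
for non-Hermitian matrices. -/
def matLog {d : ℕ} (A : Matrix (Fin d) (Fin d) ℂ) : Matrix (Fin d) (Fin d) ℂ :=
  if hA : A.IsHermitian then
    (hA.eigenvectorUnitary : Matrix (Fin d) (Fin d) ℂ) *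
      Matrix.diagonal (fun i => (Real.log (hA.eigenvalues i) : ℂ)) *
      (star hA.eigenvectorUnitary : Matrix (Fin d) (Fin d) ℂ)
  else 0

/-- The absolute value `|A| = √(AᴴA)` of a matrix. -/
def matAbs {d : ℕ} (A : Matrix (Fin d) (Fin d) ℂ) : Matrix (Fin d) (Fin d) ℂ :=
  (Matrix.posSemidef_conjTranspose_mul_self A).1.eigenvectorUnitary.1 *
    Matrix.diagonal ((↑) ∘ (√·) ∘ (Matrix.posSemidef_conjTranspose_mul_self A).1.eigenvalues) *
    (star (Matrix.posSemidef_conjTranspose_mul_self A).1.eigenvectorUnitary :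
      Matrix (Fin d) (Fin d) ℂ)

/-- The trace norm `‖A‖₁ = tr √(AᴴA)`. -/
def traceNorm {d : ℕ} (A : Matrix (Fin d) (Fin d) ℂ) : ℝ :=
  ((matAbs A).trace).re

/-- The positive part `A₊ = (A + |A|)/2` of a (Hermitian) matrix. -/
def matPos {d : ℕ} (A : Matrix (Fin d) (Fin d) ℂ) : Matrix (Fin d) (Fin d) ℂ :=
  (2⁻¹ : ℂ) • (A + matAbs A)

/-- The negative part `A₋ = (|A| − A)/2` of a (Hermitian) matrix. -/
def matNeg {d : ℕ} (A : Matrix (Fin d) (Fin d) ℂ) : Matrix (Fin d) (Fin d) ℂ :=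
  (2⁻¹ : ℂ) • (matAbs A - A)

/-- The quantum relative entropy `S(ρ‖σ) = tr ρ (log ρ − log σ)`. -/
def relEnt {d : ℕ} (ρ σ : Matrix (Fin d) (Fin d) ℂ) : ℝ :=
  ((ρ * (matLog ρ - matLog σ)).trace).re

/-- Smallest eigenvalue of a Hermitian matrix. -/
def lamMin {d : ℕ} {A : Matrix (Fin d) (Fin d) ℂ} (hA : A.IsHermitian) : ℝ :=
  ⨅ i, hA.eigenvalues i

/-- The asymmetry function of the binary Kullback–Leibler divergence:
`a(p,t) = (2p+t)·log(1+t/p) + (2(1−p)−t)·log(1−t/(1−p))`. -/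
def asym (p t : ℝ) : ℝ :=
  (2 * p + t) * Real.log (1 + t / p) + (2 * (1 - p) - t) * Real.log (1 - t / (1 - p))


/-- Trapezoid inequality for `1/t`: for `0 < a < b`, `2·(log b − log a) < (b−a)(1/a+1/b)`. -/
lemma log_trap {a b : ℝ} (ha : 0 < a) (hab : a < b) :
    2 * (Real.log b - Real.log a) < (b - a) * (1 / a + 1 / b) := by
  have hb : 0 < b := ha.trans hab
  have ht : 0 < Real.log b - Real.log a := sub_pos.2 (Real.log_lt_log ha hab)
  have hs := Real.self_lt_sinh_iff.mpr ht
  rw [Real.sinh_eq] at hs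
  have h1 : Real.exp (Real.log b - Real.log a) = b / a := by
    rw [Real.exp_sub, Real.exp_log hb, Real.exp_log ha]
  have h2 : Real.exp (-(Real.log b - Real.log a)) = a / b := by
    rw [Real.exp_neg, h1]; rw [inv_div]
  rw [h1, h2] at hs
  have heq : (b / a - a / b) / 2 = (b - a) * (1 / a + 1 / b) / 2 := by
    field_simp
    ring
  linarith

/-- For fixed `0 < T < 1`, the asymmetry function `x ↦ a(x, T)` is strictly decreasing
on the interval `(0, 1 − T)`. -/
theorem strictAntiOn_asym (T : ℝ) (hT0 : 0 < T) (hT1 : T < 1) :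
    StrictAntiOn (fun x : ℝ => asym x T) (Set.Ioo 0 (1 - T)) := by
  have hg : StrictAntiOn (fun x : ℝ => (2 * x + T) * (Real.log (x + T) - Real.log x)
      + (2 * (1 - x) - T) * (Real.log (1 - x - T) - Real.log (1 - x)))
      (Set.Ioo 0 (1 - T)) := by
    have hder : ∀ x ∈ Set.Ioo (0:ℝ) (1 - T),
        HasDerivAt (fun x : ℝ => (2 * x + T) * (Real.log (x + T) - Real.log x)
          + (2 * (1 - x) - T) * (Real.log (1 - x - T) - Real.log (1 - x)))
        ((2 * (Real.log (x + T) - Real.log x) - T * (1 / x + 1 / (x + T)))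
          + (2 * (Real.log (1 - x) - Real.log (1 - x - T)) - T * (1 / (1 - x - T) + 1 / (1 - x)))) x := by
      intro x hx
      obtain ⟨hx0, hx1⟩ := hx
      have hxT : 0 < x + T := by linarith
      have h1x : (0:ℝ) < 1 - x := by linarith
      have h1xT : (0:ℝ) < 1 - x - T := by linarith
      have h1 : HasDerivAt (fun x : ℝ => Real.log (x + T)) (1 / (x + T)) x := by
        simpa using ((hasDerivAt_id x).add_const T).log (ne_of_gt hxT)
      have h2 : HasDerivAt (fun x : ℝ => Real.log x) (1 / x) x := by
        simpa [one_div] using Real.hasDerivAt_log (ne_of_gt hx0)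
      have hi3 : HasDerivAt (fun x : ℝ => 1 - x - T) (-1) x := by
        simpa using ((hasDerivAt_id x).const_sub 1).sub_const T
      have h3 : HasDerivAt (fun x : ℝ => Real.log (1 - x - T)) (-1 / (1 - x - T)) x :=
        hi3.log (ne_of_gt h1xT)
      have hi4 : HasDerivAt (fun x : ℝ => 1 - x) (-1) x := by
        simpa using (hasDerivAt_id x).const_sub 1
      have h4 : HasDerivAt (fun x : ℝ => Real.log (1 - x)) (-1 / (1 - x)) x :=
        hi4.log (ne_of_gt h1x)
      have hc1 : HasDerivAt (fun x : ℝ => 2 * x + T) 2 x := by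
        simpa using ((hasDerivAt_id x).const_mul 2).add_const T
      have hc2 : HasDerivAt (fun x : ℝ => 2 * (1 - x) - T) (-2) x := by
        simpa using (hi4.const_mul 2).sub_const T
      have hA := hc1.mul (h1.sub h2)
      have hB := hc2.mul (h3.sub h4)
      have := hA.add hB
      refine this.congr_deriv ?_
      simp only [Pi.sub_apply]
      field_simp [ne_of_gt hx0, ne_of_gt hxT, ne_of_gt h1x, ne_of_gt h1xT]
      ring
    apply strictAntiOn_of_deriv_neg (convex_Ioo _ _)
    · intro x hx
      exact (hder x hx).continuousAt.continuousWithinAt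
    · intro x hx
      rw [interior_Ioo] at hx
      rw [(hder x hx).deriv]
      obtain ⟨hx0, hx1⟩ := hx
      have hxT : x < x + T := by linarith
      have h1xT : (0:ℝ) < 1 - x - T := by linarith
      have t1 := log_trap hx0 hxT
      have t2 := log_trap h1xT (by linarith : 1 - x - T < 1 - x)
      have e1 : x + T - x = T := by ring
      have e2 : 1 - x - (1 - x - T) = T := by ring
      rw [e1] at t1
      rw [e2] at t2
      linarith
  intro x hx y hy hxy
  have ex : ∀ z ∈ Set.Ioo (0:ℝ) (1 - T), asym z T
      = (2 * z + T) * (Real.log (z + T) - Real.log z)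
        + (2 * (1 - z) - T) * (Real.log (1 - z - T) - Real.log (1 - z)) := by
    intro z hz
    obtain ⟨hz0, hz1⟩ := hz
    have hzT : (0:ℝ) < z + T := by linarith
    have h1z : (0:ℝ) < 1 - z := by linarith
    have h1zT : (0:ℝ) < 1 - z - T := by linarith
    unfold asym
    rw [show 1 + T / z = (z + T) / z by field_simp,
        show 1 - T / (1 - z) = (1 - z - T) / (1 - z) by field_simp,
        Real.log_div (ne_of_gt hzT) (ne_of_gt hz0),
        Real.log_div (ne_of_gt h1zT) (ne_of_gt h1z)]
  have := hg hx hy hxy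
  simpa only [ex x hx, ex y hy] using this
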